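/- arXiv:2509.15544 — 4 statements merged into one kernel-verified Lean document; each statement's English description precedes it below -/
import Mathlib

section
/- Let (Ω₁, d₁) and (Ω₂, d₂) be complete separable metric spaces. Let X, Y, and Yⁿ (n ∈ ℕ) be random variables defined on a common probability space (Ω, 𝓕, ℙ), with X taking values in Ω₁ and Y, Yⁿ taking values in Ω₂. Suppose that the laws of the pairs (X, Yⁿ) on Ω₁ × Ω₂ converge weakly as n → ∞ to the law of (X, Y), i.e., E[g(X, Yⁿ)] → E[g(X, Y)] for every bounded continuous function g : Ω₁ × Ω₂ → ℝ. Suppose further that Y is almost surely determined by X in the sense that there exists a Borel measurable function h : Ω₁ → Ω₂ with Y = h(X) almost surely. Then Yⁿ → Y in probability, i.e., for every ε > 0, ℙ[d₂(Yⁿ, Y) > ε] → 0 as n → ∞. -/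
open Filter Topology MeasureTheory Set ENNReal

section Lusin

variable {α β : Type*} [MetricSpace α] [MeasurableSpace α] [BorelSpace α] [MetricSpace β]

/-- Lusin-type step for a countably-valued measurable function `x ↦ v (idx x)`. -/
lemma closed_continuousOn_of_nat_valued (μ : Measure α) [IsFiniteMeasure μ]
    (v : ℕ → β) (idx : α → ℕ) (hidx : Measurable idx)
    {δ : ℝ≥0∞} (hδ : δ ≠ 0) :
    ∃ K : Set α, IsClosed K ∧ μ Kᶜ < δ ∧ ContinuousOn (fun x => v (idx x)) K := by
  obtain ⟨ε, εpos, εsum⟩ :=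
    ENNReal.exists_pos_sum_of_countable' (ENNReal.half_pos hδ).ne' ℕ
  set B : ℕ → Set α := fun k => idx ⁻¹' {k} with hB
  have hBmeas : ∀ k, MeasurableSet (B k) := fun k => hidx (measurableSet_singleton k)
  -- closed subsets of the level sets
  have hC : ∀ k, ∃ C, C ⊆ B k ∧ IsClosed C ∧ μ (B k \ C) < ε k := fun k =>
    (hBmeas k).exists_isClosed_diff_lt (measure_ne_top μ _) (εpos k).ne'
  choose C hCB hCclosed hCμ using hC
  -- tail sets
  set T : ℕ → Set α := fun N => {x | N ≤ idx x} with hT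
  have hTmeas : ∀ N, MeasurableSet (T N) := fun N =>
    hidx measurableSet_Ici
  have hTanti : Antitone T := fun a b hab x hx => le_trans hab hx
  have hTempty : ⋂ N, T N = ∅ := by
    ext x
    simp only [mem_iInter, mem_empty_iff_false, iff_false]
    intro hx
    have h2 : idx x + 1 ≤ idx x := hx (idx x + 1)
    omega
  have hTtendsto : Tendsto (fun N => μ (T N)) atTop (𝓝 0) := by
    have := tendsto_measure_iInter_atTop (μ := μ) (fun N => (hTmeas N).nullMeasurableSet)
      hTanti ⟨0, measure_ne_top μ _⟩
    rw [hTempty] at this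
    simpa [Function.comp_def] using this
  obtain ⟨N, hN⟩ : ∃ N, μ (T N) < δ / 2 := by
    have := hTtendsto.eventually_lt_const (ENNReal.half_pos hδ)
    exact this.exists
  refine ⟨⋃ i : Fin N, C i, isClosed_iUnion_of_finite fun i => hCclosed i, ?_, ?_⟩
  · have hsub : (⋃ i : Fin N, C i)ᶜ ⊆ T N ∪ ⋃ k, B k \ C k := by
      intro x hx
      simp only [mem_compl_iff, mem_iUnion, not_exists] at hx
      by_cases hxN : N ≤ idx x
      · exact Or.inl hxN
      · push_neg at hxN
        exact Or.inr (mem_iUnion.2 ⟨idx x, ⟨rfl, hx ⟨idx x, hxN⟩⟩⟩)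
    calc μ (⋃ i : Fin N, C i)ᶜ ≤ μ (T N) + μ (⋃ k, B k \ C k) :=
          le_trans (measure_mono hsub) (measure_union_le _ _)
      _ ≤ μ (T N) + ∑' k, μ (B k \ C k) := by gcongr; exact measure_iUnion_le _
      _ ≤ μ (T N) + ∑' k, ε k := by gcongr with k; exact (hCμ k).le
      _ < δ / 2 + δ / 2 := by exact ENNReal.add_lt_add hN εsum
      _ = δ := ENNReal.add_halves δ
  · apply LocallyFinite.continuousOn_iUnion
    · exact locallyFinite_of_finite _
    · exact fun i => hCclosed i
    · intro i
      refine (continuousOn_const (c := v i)).congr fun x hx => ?_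
      have : idx x = (i : ℕ) := hCB i hx
      simp [this]

/-- **Lusin's theorem** (closed-set version) for maps into a separable metric space. -/
lemma lusin_closed [TopologicalSpace.SeparableSpace β] [Nonempty β] [MeasurableSpace β] [BorelSpace β]
    (μ : Measure α) [IsFiniteMeasure μ] {h : α → β} (hh : Measurable h)
    {δ : ℝ≥0∞} (hδ : δ ≠ 0) :
    ∃ K : Set α, IsClosed K ∧ μ Kᶜ < δ ∧ ContinuousOn h K := by
  classical
  obtain ⟨u, hu⟩ := TopologicalSpace.exists_dense_seq β
  have hex : ∀ (m : ℕ) (x : α), ∃ k, dist (h x) (u k) < 1 / (m + 1) := by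
    intro m x
    exact hu.exists_dist_lt (h x) (by positivity)
  set idx : ℕ → α → ℕ := fun m x => Nat.find (hex m x) with hidxdef
  have hidx : ∀ m, Measurable (idx m) := by
    intro m
    apply measurable_find
    intro k
    exact hh measurableSet_ball
  set g : ℕ → α → β := fun m x => u (idx m x) with hgdef
  have hgdist : ∀ m x, dist (h x) (g m x) < 1 / (m + 1) := fun m x => Nat.find_spec (hex m x)
  obtain ⟨η, ηpos, ηsum⟩ := ENNReal.exists_pos_sum_of_countable' hδ ℕ
  have hKm : ∀ m : ℕ, ∃ K : Set α, IsClosed K ∧ μ Kᶜ < η m ∧ ContinuousOn (g m) K := by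
    intro m
    exact closed_continuousOn_of_nat_valued μ u (idx m) (hidx m) (ηpos m).ne'
  choose K hKclosed hKμ hKcont using hKm
  refine ⟨⋂ m, K m, isClosed_iInter hKclosed, ?_, ?_⟩
  · calc μ (⋂ m, K m)ᶜ = μ (⋃ m, (K m)ᶜ) := by rw [compl_iInter]
      _ ≤ ∑' m, μ (K m)ᶜ := measure_iUnion_le _
      _ ≤ ∑' m, η m := by gcongr with m; exact (hKμ m).le
      _ < δ := ηsum
  · -- uniform limit of continuous functions
    have huc : TendstoUniformlyOn g h atTop (⋂ m, K m) := by
      rw [Metric.tendstoUniformlyOn_iff]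
      intro ε hε
      obtain ⟨m₀, hm₀⟩ := exists_nat_one_div_lt hε
      filter_upwards [eventually_ge_atTop m₀] with m hm x _
      calc dist (h x) (g m x) < 1 / (m + 1) := hgdist m x
        _ ≤ 1 / (m₀ + 1) := by
            apply one_div_le_one_div_of_le (by positivity)
            exact_mod_cast Nat.succ_le_succ hm
        _ < ε := hm₀
    exact huc.continuousOn (Eventually.of_forall fun m =>
      (hKcont m).mono (iInter_subset _ m)).frequently

end Lusin

open Filter Topology MeasureTheory

/-- Let `Ω₁, Ω₂` be complete separable metric spaces, and let `X, Yₙ, Y`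
be random variables on a common probability space, with `X` valued in `Ω₁` and `Y, Yₙ`
valued in `Ω₂`. If the laws of `(X, Yₙ)` converge weakly to the law of `(X, Y)` and `Y`
is a.s. determined by `X` (via a Borel measurable function), then `Yₙ → Y` in probability. -/
theorem tendsto_in_probability_of_joint_weak_convergence
    {Ω : Type*} [MeasureSpace Ω] [IsProbabilityMeasure (volume : Measure Ω)]
    {Ω₁ : Type*} [MetricSpace Ω₁] [CompleteSpace Ω₁] [TopologicalSpace.SeparableSpace Ω₁]
    [MeasurableSpace Ω₁] [BorelSpace Ω₁]
    {Ω₂ : Type*} [MetricSpace Ω₂] [CompleteSpace Ω₂] [TopologicalSpace.SeparableSpace Ω₂]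
    [MeasurableSpace Ω₂] [BorelSpace Ω₂]
    (X : Ω → Ω₁) (Y : Ω → Ω₂) (Yn : ℕ → Ω → Ω₂)
    (hX : Measurable X) (hY : Measurable Y) (hYn : ∀ n, Measurable (Yn n))
    (hweak : ∀ g : BoundedContinuousFunction (Ω₁ × Ω₂) ℝ,
      Tendsto (fun n => ∫ ω, g (X ω, Yn n ω) ∂(volume : Measure Ω)) atTop
        (𝓝 (∫ ω, g (X ω, Y ω) ∂(volume : Measure Ω))))
    (hdet : ∃ h : Ω₁ → Ω₂, Measurable h ∧ ∀ᵐ ω ∂(volume : Measure Ω), Y ω = h (X ω)) :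
    ∀ ε > (0 : ℝ),
      Tendsto (fun n => (volume : Measure Ω) {ω | ε < dist (Yn n ω) (Y ω)}) atTop (𝓝 0) := by
  obtain ⟨h, hhm, hhae⟩ := hdet
  intro ε hε
  set P : Measure Ω := volume with hP
  haveI : Nonempty Ω := Set.nonempty_iff_univ_nonempty.mpr
    (nonempty_of_measure_ne_zero (by simp : P Set.univ ≠ 0))
  haveI : Nonempty Ω₂ := ⟨Y (Classical.arbitrary Ω)⟩
  haveI : SecondCountableTopology Ω₁ := UniformSpace.secondCountable_of_separable Ω₁
  haveI : SecondCountableTopology Ω₂ := UniformSpace.secondCountable_of_separable Ω₂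
  -- the laws as probability measures
  haveI : IsProbabilityMeasure (P.map X) := Measure.isProbabilityMeasure_map hX.aemeasurable
  have hpair : ∀ n, Measurable fun ω => (X ω, Yn n ω) := fun n => hX.prodMk (hYn n)
  have hpairY : Measurable fun ω => (X ω, Y ω) := hX.prodMk hY
  set μs : ℕ → ProbabilityMeasure (Ω₁ × Ω₂) := fun n =>
    ⟨P.map fun ω => (X ω, Yn n ω), Measure.isProbabilityMeasure_map (hpair n).aemeasurable⟩ with hμs
  set μl : ProbabilityMeasure (Ω₁ × Ω₂) :=
    ⟨P.map fun ω => (X ω, Y ω), Measure.isProbabilityMeasure_map hpairY.aemeasurable⟩ with hμl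
  -- weak convergence of the laws
  have hconv : Tendsto μs atTop (𝓝 μl) := by
    rw [ProbabilityMeasure.tendsto_iff_forall_integral_tendsto]
    intro f
    have h1 : ∀ n, ∫ p, f p ∂(μs n : Measure (Ω₁ × Ω₂)) = ∫ ω, f (X ω, Yn n ω) ∂P := fun n =>
      integral_map (hpair n).aemeasurable f.continuous.measurable.aestronglyMeasurable
    have h2 : ∫ p, f p ∂(μl : Measure (Ω₁ × Ω₂)) = ∫ ω, f (X ω, Y ω) ∂P :=
      integral_map hpairY.aemeasurable f.continuous.measurable.aestronglyMeasurable
    simp only [h1, h2]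
    exact hweak f
  set A : ℕ → Set Ω := fun n => {ω | ε < dist (Yn n ω) (Y ω)} with hA
  have hnull : P {ω | Y ω ≠ h (X ω)} = 0 := by
    simpa [ae_iff] using hhae
  -- key step: the limsup is at most any positive δ
  have key : ∀ δ : ℝ≥0∞, δ ≠ 0 → Filter.limsup (fun n => P (A n)) atTop ≤ δ := by
    intro δ hδ
    obtain ⟨K, hKclosed, hKμ, hKcont⟩ := lusin_closed (μ := P.map X) hhm hδ
    set F : Set (Ω₁ × Ω₂) := (K ×ˢ Set.univ) ∩ (fun p : Ω₁ × Ω₂ => dist p.2 (h p.1)) ⁻¹' Set.Ici ε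
      with hF
    have hφ : ContinuousOn (fun p : Ω₁ × Ω₂ => dist p.2 (h p.1)) (K ×ˢ Set.univ) := by
      exact continuous_dist.comp_continuousOn
        (continuousOn_snd.prodMk (hKcont.comp continuousOn_fst fun p hp => hp.1))
    have hFclosed : IsClosed F :=
      hφ.preimage_isClosed_of_isClosed (hKclosed.prod isClosed_univ) isClosed_Ici
    -- the limit law gives F measure zero
    have hμlF : (μl : Measure (Ω₁ × Ω₂)) F = 0 := by
      have : (μl : Measure (Ω₁ × Ω₂)) F = P ((fun ω => (X ω, Y ω)) ⁻¹' F) :=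
        Measure.map_apply hpairY hFclosed.measurableSet
      rw [this]
      refine measure_mono_null ?_ hnull
      intro ω hω
      simp only [Set.mem_preimage, hF, Set.mem_inter_iff, Set.mem_prod, Set.mem_Ici,
        Set.mem_preimage] at hω
      intro heq
      have h0 : dist (Y ω) (h (X ω)) = 0 := by rw [heq]; simp
      have := hω.2
      rw [h0] at this
      exact absurd (lt_of_lt_of_le hε this) (lt_irrefl _)
    -- portmanteau
    have hlimsupF : Filter.limsup (fun n => (μs n : Measure (Ω₁ × Ω₂)) F) atTop ≤ 0 := by
      have := ProbabilityMeasure.limsup_measure_closed_le_of_tendsto hconv hFclosed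
      rwa [hμlF] at this
    -- pointwise bound on the probabilities
    have hbound : ∀ n, P (A n) ≤ (P.map X) Kᶜ + (μs n : Measure (Ω₁ × Ω₂)) F := by
      intro n
      have hmapF : (μs n : Measure (Ω₁ × Ω₂)) F = P ((fun ω => (X ω, Yn n ω)) ⁻¹' F) :=
        Measure.map_apply (hpair n) hFclosed.measurableSet
      have hmapK : (P.map X) Kᶜ = P (X ⁻¹' Kᶜ) :=
        Measure.map_apply hX hKclosed.measurableSet.compl
      rw [hmapF, hmapK]
      have hsub : A n ⊆ (X ⁻¹' Kᶜ ∪ (fun ω => (X ω, Yn n ω)) ⁻¹' F) ∪ {ω | Y ω ≠ h (X ω)} := by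
        intro ω hω
        by_cases heq : Y ω = h (X ω)
        · left
          by_cases hXK : X ω ∈ K
          · right
            simp only [Set.mem_preimage, hF, Set.mem_inter_iff, Set.mem_prod, Set.mem_Ici,
              Set.mem_preimage]
            refine ⟨⟨hXK, Set.mem_univ _⟩, ?_⟩
            rw [← heq]
            exact le_of_lt hω
          · exact Or.inl hXK
        · exact Or.inr heq
      calc P (A n) ≤ P ((X ⁻¹' Kᶜ ∪ (fun ω => (X ω, Yn n ω)) ⁻¹' F) ∪ {ω | Y ω ≠ h (X ω)}) :=
            measure_mono hsub
        _ ≤ P (X ⁻¹' Kᶜ ∪ (fun ω => (X ω, Yn n ω)) ⁻¹' F) + P {ω | Y ω ≠ h (X ω)} :=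
            measure_union_le _ _
        _ = P (X ⁻¹' Kᶜ ∪ (fun ω => (X ω, Yn n ω)) ⁻¹' F) := by rw [hnull, add_zero]
        _ ≤ P (X ⁻¹' Kᶜ) + P ((fun ω => (X ω, Yn n ω)) ⁻¹' F) := measure_union_le _ _
    calc Filter.limsup (fun n => P (A n)) atTop
        ≤ Filter.limsup (fun n => (P.map X) Kᶜ + (μs n : Measure (Ω₁ × Ω₂)) F) atTop :=
          Filter.limsup_le_limsup (Filter.Eventually.of_forall hbound)
      _ = (P.map X) Kᶜ + Filter.limsup (fun n => (μs n : Measure (Ω₁ × Ω₂)) F) atTop :=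
          limsup_const_add atTop _ _ Filter.isBounded_le_of_top Filter.isCobounded_le_of_bot
      _ ≤ (P.map X) Kᶜ + 0 := by gcongr
      _ ≤ δ := by rw [add_zero]; exact hKμ.le
  have hlim : Filter.limsup (fun n => P (A n)) atTop = 0 := by
    refine le_antisymm ?_ zero_le
    refine ENNReal.le_of_forall_pos_le_add fun r hr _ => ?_
    rw [zero_add]
    exact key r (by exact_mod_cast hr.ne')
  have hfinal : ∀ b : ℝ≥0∞, 0 < b → ∀ᶠ n in atTop, P (A n) < b := fun b hb =>
    Filter.eventually_lt_of_limsup_lt (by rw [hlim]; exact hb)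
  rw [ENNReal.tendsto_nhds_zero]
  intro b hb
  exact (hfinal b hb).mono fun n hn => hn.le
end

section
/- Let B = (B_t)_{t ≥ 0} be a standard one-dimensional Brownian motion started from 0, defined on a probability space (Ω, 𝓕, ℙ). Fix p ∈ (0,1). Then there exist ε, δ ∈ (0,1) and K₀ ∈ ℕ, depending only on p, such that for every natural number K ≥ K₀ the following holds: with probability at least p, the number of indices j ∈ {1, …, K−1} such that B_t > δ for all t ∈ [j/K, (j+1)/K] is at least εK. -/
open Filter Topology MeasureTheory ProbabilityTheory
open scoped NNReal ENNReal

/-- A standard one-dimensional Brownian motion started from `0`: it vanishes at time `0`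
almost surely, has almost surely continuous sample paths, and for `0 ≤ s ≤ t` the increment
`B t - B s` is a centered Gaussian with variance `t - s`, independent of `(B u)_{u ≤ s}`. -/
def IsStandardBrownianMotion {Ω : Type*} [MeasureSpace Ω] (B : ℝ≥0 → Ω → ℝ) : Prop :=
  (∀ᵐ ω ∂(volume : Measure Ω), B 0 ω = 0) ∧
  (∀ᵐ ω ∂(volume : Measure Ω), Continuous fun t : ℝ≥0 => B t ω) ∧
  (∀ s t : ℝ≥0, s ≤ t →
    Measure.map (fun ω => B t ω - B s ω) (volume : Measure Ω) = gaussianReal 0 (t - s)) ∧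
  (∀ s t : ℝ≥0, s ≤ t →
    Indep (MeasurableSpace.comap (fun ω => B t ω - B s ω) inferInstance)
      (⨆ u ∈ Set.Iic s, MeasurableSpace.comap (B u) inferInstance) (volume : Measure Ω))


lemma gauss_Iic_one_lt_one : gaussianReal 0 1 (Set.Iic 1) < 1 := by
  have hdisj : Disjoint (Set.Iic (1:ℝ)) (Set.Ioi 1) := Set.Iic_disjoint_Ioi le_rfl
  have hun : Set.Iic (1:ℝ) ∪ Set.Ioi 1 = Set.univ := Set.Iic_union_Ioi
  have hpos : 0 < gaussianReal 0 1 (Set.Ioi 1) := by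
    rcases eq_or_lt_of_le (zero_le : (0:ℝ≥0∞) ≤ gaussianReal 0 1 (Set.Ioi 1)) with h | h
    · exfalso
      have : (volume : Measure ℝ) (Set.Ioi 1) = 0 :=
        gaussianReal_absolutelyContinuous' 0 one_ne_zero h.symm
      simp [Real.volume_Ioi] at this
    · exact h
  have hadd : gaussianReal 0 1 (Set.Iic 1) + gaussianReal 0 1 (Set.Ioi 1) = 1 := by
    rw [← measure_union hdisj measurableSet_Ioi, hun, measure_univ]
  by_contra hle
  push_neg at hle
  have h1 : gaussianReal 0 1 (Set.Iic 1) = 1 := le_antisymm prob_le_one hle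
  rw [h1] at hadd
  have : (1:ℝ≥0∞) + gaussianReal 0 1 (Set.Ioi 1) ≤ 1 + 0 := by
    rw [add_zero, hadd]
  rw [ENNReal.add_le_add_iff_left ENNReal.one_ne_top] at this
  exact hpos.ne' (le_antisymm this zero_le)

lemma gauss_Iic_scale (v : ℝ≥0) (hv : v ≠ 0) (x : ℝ) :
    gaussianReal 0 v (Set.Iic x) = gaussianReal 0 1 (Set.Iic (x / Real.sqrt v)) := by
  have hs : (0:ℝ) < Real.sqrt v := Real.sqrt_pos.2 (by exact_mod_cast pos_iff_ne_zero.2 hv)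
  have hmap := gaussianReal_map_const_mul (μ := 0) (v := 1) (Real.sqrt v)
  have hv' : (NNReal.mk ((Real.sqrt v)^2) (sq_nonneg _) * 1 : ℝ≥0) = v := by
    ext
    simp [Real.sq_sqrt (NNReal.coe_nonneg v)]
  rw [hv', mul_zero] at hmap
  rw [← hmap, Measure.map_apply (measurable_id'.const_mul _) measurableSet_Iic]
  congr 1
  ext y
  simp only [Set.mem_preimage, Set.mem_Iic]
  rw [← le_div_iff₀' hs]

lemma gauss_tail (ε : ℝ≥0∞) (hε : 0 < ε) : ∃ c : ℝ, 0 < c ∧ gaussianReal 0 1 (Set.Iic (-c)) < ε := by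
  have hiInter : ⋂ n : ℕ, Set.Iic (-(n:ℝ)) = ∅ := by
    ext x
    simp only [Set.mem_iInter, Set.mem_Iic, Set.mem_empty_iff_false, iff_false, not_forall, not_le]
    obtain ⟨n, hn⟩ := exists_nat_gt (-x)
    exact ⟨n, by linarith⟩
  have := tendsto_measure_iInter_atTop (μ := gaussianReal 0 1)
    (s := fun n : ℕ => Set.Iic (-(n:ℝ)))
    (fun n => measurableSet_Iic.nullMeasurableSet)
    (fun a b hab => Set.Iic_subset_Iic.2 (by exact_mod_cast neg_le_neg (by exact_mod_cast hab)))
    ⟨0, by simp⟩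
  rw [hiInter] at this
  simp only [measure_empty] at this
  have := this.eventually_lt_const hε
  obtain ⟨n, hn⟩ := this.exists_forall_of_atTop
  refine ⟨(n:ℝ) + 1, by positivity, ?_⟩
  calc gaussianReal 0 1 (Set.Iic (-((n:ℝ)+1))) ≤ gaussianReal 0 1 (Set.Iic (-((n+1:ℕ):ℝ))) := by
        push_cast; exact le_rfl
    _ < ε := hn (n+1) (Nat.le_succ n)
section Core
set_option linter.unusedSectionVars false
variable {Ω : Type*} [MeasureSpace Ω] [IsProbabilityMeasure (volume : Measure Ω)]
  (B : ℝ≥0 → Ω → ℝ)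

lemma aemeas_incr
    (hmap : ∀ s t : ℝ≥0, s ≤ t →
      Measure.map (fun ω => B t ω - B s ω) (volume : Measure Ω) = gaussianReal 0 (t - s))
    {s t : ℝ≥0} (h : s ≤ t) :
    AEMeasurable (fun ω => B t ω - B s ω) (volume : Measure Ω) :=
  aemeasurable_of_map_neZero (by rw [hmap s t h]; exact ⟨IsProbabilityMeasure.ne_zero _⟩)

lemma aemeas_B (h0 : ∀ᵐ ω ∂(volume : Measure Ω), B 0 ω = 0)
    (hmap : ∀ s t : ℝ≥0, s ≤ t →
      Measure.map (fun ω => B t ω - B s ω) (volume : Measure Ω) = gaussianReal 0 (t - s))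
    (s : ℝ≥0) : AEMeasurable (B s) (volume : Measure Ω) := by
  have h1 : AEMeasurable (fun ω => B s ω - B 0 ω) (volume : Measure Ω) :=
    aemeas_incr B hmap (zero_le : (0:ℝ≥0) ≤ s)
  have h2 : (fun ω => B s ω - B 0 ω) =ᵐ[(volume : Measure Ω)] B s :=
    h0.mono fun ω hω => by simp [hω]
  exact h1.congr h2

lemma lawB (h0 : ∀ᵐ ω ∂(volume : Measure Ω), B 0 ω = 0)
    (hmap : ∀ s t : ℝ≥0, s ≤ t →
      Measure.map (fun ω => B t ω - B s ω) (volume : Measure Ω) = gaussianReal 0 (t - s))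
    (s : ℝ≥0) : Measure.map (B s) (volume : Measure Ω) = gaussianReal 0 s := by
  have h2 : (fun ω => B s ω - B 0 ω) =ᵐ[(volume : Measure Ω)] B s :=
    h0.mono fun ω hω => by simp [hω]
  rw [← Measure.map_congr h2, hmap 0 s zero_le, tsub_zero]

lemma stay_nonpos (h0 : ∀ᵐ ω ∂(volume : Measure Ω), B 0 ω = 0)
    (hmap : ∀ s t : ℝ≥0, s ≤ t →
      Measure.map (fun ω => B t ω - B s ω) (volume : Measure Ω) = gaussianReal 0 (t - s))
    (hindep : ∀ s t : ℝ≥0, s ≤ t →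
      Indep (MeasurableSpace.comap (fun ω => B t ω - B s ω) inferInstance)
        (⨆ u ∈ Set.Iic s, MeasurableSpace.comap (B u) inferInstance) (volume : Measure Ω)) :
    (volume : Measure Ω) {ω | ∀ t : ℝ≥0, t ≤ 1 → B t ω ≤ 0} = 0 := by
  set μ := (volume : Measure Ω) with hμ
  set q := gaussianReal 0 1 (Set.Iic (1:ℝ)) with hq_def
  have hq1 : q < 1 := gauss_Iic_one_lt_one
  set S := {ω | ∀ t : ℝ≥0, t ≤ 1 → B t ω ≤ 0} with hS
  have main : ∀ (θ : ℝ≥0), 0 < θ → θ < 1 → ∀ n : ℕ,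
      μ S ≤ q ^ n + n * gaussianReal 0 1 (Set.Iic (-Real.sqrt ((θ:ℝ)⁻¹ - 1))) := by
    intro θ hθ0 hθ1 n
    set c := Real.sqrt ((θ:ℝ)⁻¹ - 1) with hc_def
    set e := gaussianReal 0 1 (Set.Iic (-c)) with he_def
    set F : ℕ → Set Ω := fun m =>
      ⋂ (k : ℕ) (_ : m ≤ k) (_ : k ≤ n), (B (θ^k))⁻¹' (Set.Iic 0) with hF
    have hFmeas : ∀ m, MeasurableSet[⨆ u ∈ Set.Iic (θ^m),
        MeasurableSpace.comap (B u) inferInstance] (F m) := by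
      intro m
      refine MeasurableSet.iInter fun k => MeasurableSet.iInter fun hk =>
        MeasurableSet.iInter fun hk' => ?_
      have hpow : θ^k ≤ θ^m := pow_le_pow_right_of_le_one' hθ1.le hk
      have hle : MeasurableSpace.comap (B (θ^k)) inferInstance ≤
          ⨆ u ∈ Set.Iic (θ^m), MeasurableSpace.comap (B u) inferInstance :=
        le_iSup₂ (f := fun u (_ : u ∈ Set.Iic (θ^m)) =>
          MeasurableSpace.comap (B u) inferInstance) (θ^k) (Set.mem_Iic.2 hpow)
      exact hle _ ⟨Set.Iic 0, measurableSet_Iic, rfl⟩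
    have step : ∀ m : ℕ, 1 ≤ m → m ≤ n → μ (F (m-1)) ≤ q * μ (F m) + e := by
      intro m hm1 hmn
      set s := θ^m with hs_def
      set t := θ^(m-1) with ht_def
      have hst : s ≤ t := pow_le_pow_right_of_le_one' hθ1.le (Nat.sub_le m 1)
      have hstlt : s < t := by
        have : (θ:ℝ)^m < (θ:ℝ)^(m-1) :=
          pow_lt_pow_right_of_lt_one₀ (by exact_mod_cast hθ0) (by exact_mod_cast hθ1) (by omega)
        rw [hs_def, ht_def, ← NNReal.coe_lt_coe]
        push_cast
        exact this
      set v : ℝ≥0 := t - s with hv_def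
      have hv : v ≠ 0 := by
        rw [hv_def, ← pos_iff_ne_zero, tsub_pos_iff_lt]
        exact hstlt
      set lam := Real.sqrt (v:ℝ) with hlam_def
      have hvpos : (0:ℝ) < v := by exact_mod_cast pos_iff_ne_zero.2 hv
      have hlampos : 0 < lam := Real.sqrt_pos.2 hvpos
      set Y := fun ω => B t ω - B s ω with hY_def
      set A := Y ⁻¹' Set.Iic lam with hA_def
      set C := F m ∩ (B s) ⁻¹' Set.Ici (-lam) with hC_def
      have hincl : F (m-1) ⊆ (A ∩ C) ∪ (B s) ⁻¹' Set.Iio (-lam) := by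
        intro ω hω
        simp only [hF, Set.mem_iInter, Set.mem_preimage, Set.mem_Iic] at hω
        by_cases hcs : B s ω < -lam
        · exact Or.inr hcs
        push_neg at hcs
        have h1 : B t ω ≤ 0 := hω (m-1) le_rfl (le_trans (Nat.sub_le m 1) hmn)
        refine Or.inl ⟨?_, ?_, hcs⟩
        · simp only [hA_def, Set.mem_preimage, Set.mem_Iic, hY_def]
          linarith
        · simp only [hF, Set.mem_iInter, Set.mem_preimage, Set.mem_Iic]
          intro k hk hk'
          exact hω k (le_trans (Nat.sub_le m 1) hk) hk'
      have hInd := hindep s t hst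
      rw [Indep_iff] at hInd
      have hCmeas : MeasurableSet[⨆ u ∈ Set.Iic s,
          MeasurableSpace.comap (B u) inferInstance] C := by
        refine MeasurableSet.inter (hFmeas m) ?_
        have hle : MeasurableSpace.comap (B s) inferInstance ≤
            ⨆ u ∈ Set.Iic s, MeasurableSpace.comap (B u) inferInstance :=
          le_iSup₂ (f := fun u (_ : u ∈ Set.Iic s) =>
            MeasurableSpace.comap (B u) inferInstance) s (Set.mem_Iic.2 le_rfl)
        exact hle _ ⟨Set.Ici (-lam), measurableSet_Ici, rfl⟩
      have hmulC : μ (A ∩ C) = μ A * μ C :=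
        hInd A C ⟨Set.Iic lam, measurableSet_Iic, rfl⟩ hCmeas
      have hA : μ A = q := by
        have hmap' := hmap s t hst
        have hYlaw : μ A = gaussianReal 0 v (Set.Iic lam) := by
          rw [hA_def, ← hmap',
            Measure.map_apply_of_aemeasurable (aemeas_incr B hmap hst) measurableSet_Iic]
        rw [hYlaw, gauss_Iic_scale v hv, hq_def]
        congr 2
        rw [hlam_def, div_self (Real.sqrt_pos.2 hvpos).ne']
      have hC : μ C ≤ μ (F m) := measure_mono Set.inter_subset_left
      have htail : μ ((B s) ⁻¹' Set.Iio (-lam)) ≤ e := by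
        have h1 : μ ((B s) ⁻¹' Set.Iio (-lam)) ≤ μ ((B s) ⁻¹' Set.Iic (-lam)) :=
          measure_mono (Set.preimage_mono Set.Iio_subset_Iic_self)
        have hs0 : s ≠ 0 := pow_ne_zero _ hθ0.ne'
        have h2 : μ ((B s) ⁻¹' Set.Iic (-lam)) = gaussianReal 0 s (Set.Iic (-lam)) := by
          rw [← lawB B h0 hmap s,
            Measure.map_apply_of_aemeasurable (aemeas_B B h0 hmap s) measurableSet_Iic]
        have hr0 : (0:ℝ) < (θ:ℝ) := by exact_mod_cast hθ0
        have harg : -lam / Real.sqrt (s:ℝ) = -c := by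
          have hsr : ((s:ℝ≥0):ℝ) = (θ:ℝ)^m := by rw [hs_def]; push_cast; ring
          have htr : ((t:ℝ≥0):ℝ) = (θ:ℝ)^(m-1) := by rw [ht_def]; push_cast; ring
          have hvr : ((v:ℝ≥0):ℝ) = (θ:ℝ)^(m-1) - (θ:ℝ)^m := by
            rw [hv_def, NNReal.coe_sub hst, hsr, htr]
          have hpm : (θ:ℝ)^m = (θ:ℝ)^(m-1) * θ := by
            rw [← pow_succ]
            congr 1
            omega
          have hratio : ((v:ℝ≥0):ℝ) / ((s:ℝ≥0):ℝ) = (θ:ℝ)⁻¹ - 1 := by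
            rw [hvr, hsr, hpm]
            have hpow0 : (θ:ℝ)^(m-1) ≠ 0 := pow_ne_zero _ hr0.ne'
            field_simp
          rw [hlam_def, neg_div, ← Real.sqrt_div (NNReal.coe_nonneg v), hratio, hc_def]
        rw [h2, gauss_Iic_scale s hs0, harg] at h1
        exact h1
      calc μ (F (m-1)) ≤ μ (A ∩ C) + μ ((B s)⁻¹' Set.Iio (-lam)) :=
            le_trans (measure_mono hincl) (measure_union_le _ _)
        _ ≤ q * μ (F m) + e := by
            rw [hmulC, hA]
            exact add_le_add (mul_le_mul_right hC q) htail
    have key : ∀ i, i ≤ n → μ (F (n - i)) ≤ q ^ i + i * e := by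
      intro i
      induction i with
      | zero => intro _; simpa using prob_le_one
      | succ i ih =>
        intro hin
        have hi : i ≤ n := by omega
        have h1 : n - (i+1) = (n - i) - 1 := by omega
        rw [h1]
        have hq_le : q ≤ 1 := hq1.le
        calc μ (F ((n-i) - 1)) ≤ q * μ (F (n-i)) + e := step (n-i) (by omega) (Nat.sub_le n i)
          _ ≤ q * (q ^ i + i * e) + e := by gcongr; exact ih hi
          _ = q^(i+1) + (q * (i*e) + e) := by rw [mul_add, pow_succ]; ring
          _ ≤ q^(i+1) + ((i:ℝ≥0∞)*e + e) := by
              refine add_le_add_right (add_le_add_left ?_ e) _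
              calc q * ((i:ℝ≥0∞)*e) ≤ 1 * ((i:ℝ≥0∞)*e) := mul_le_mul_left hq_le _
                _ = (i:ℝ≥0∞)*e := one_mul _
          _ = q^(i+1) + ((i+1:ℕ):ℝ≥0∞)*e := by push_cast; ring
    have hsub : S ⊆ F 0 := by
      intro ω hω
      simp only [hF, Set.mem_iInter, Set.mem_preimage, Set.mem_Iic]
      intro k _ _
      exact hω (θ^k) (pow_le_one₀ zero_le hθ1.le)
    calc μ S ≤ μ (F 0) := measure_mono hsub
      _ = μ (F (n - n)) := by rw [Nat.sub_self]
      _ ≤ q ^ n + n * e := key n le_rfl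
  -- conclude
  refine le_antisymm (ENNReal.le_of_forall_pos_le_add fun ε hε _ => ?_) zero_le
  rw [zero_add]
  have hε2 : (0:ℝ≥0∞) < (ε:ℝ≥0∞)/2 := by
    simp [ENNReal.div_pos_iff, hε.ne']
  obtain ⟨n, hn⟩ : ∃ n : ℕ, q ^ n < (ε:ℝ≥0∞)/2 := by
    have := (ENNReal.tendsto_pow_atTop_nhds_zero_of_lt_one hq1).eventually_lt_const hε2
    exact this.exists
  have hdivpos : (0:ℝ≥0∞) < (ε:ℝ≥0∞)/2/(n+1) := by
    refine ENNReal.div_pos hε2.ne' (by simp)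
  obtain ⟨c, hcpos, hc⟩ := gauss_tail _ hdivpos
  set θ : ℝ≥0 := Real.toNNReal (1/(1+c^2)) with hθ_def
  have hdenpos : (0:ℝ) < 1 + c^2 := by positivity
  have hθ0 : 0 < θ := Real.toNNReal_pos.2 (by positivity)
  have hθ1 : θ < 1 := by
    rw [hθ_def, ← Real.toNNReal_one]
    refine (Real.toNNReal_lt_toNNReal_iff one_pos).2 ?_
    rw [div_lt_one hdenpos]
    nlinarith
  have hθr : ((θ:ℝ≥0):ℝ) = 1/(1+c^2) := Real.coe_toNNReal _ (by positivity)
  have harg : Real.sqrt ((θ:ℝ)⁻¹ - 1) = c := by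
    rw [hθr]
    rw [one_div, inv_inv]
    rw [show (1:ℝ) + c^2 - 1 = c^2 by ring, Real.sqrt_sq hcpos.le]
  have hbound := main θ hθ0 hθ1 n
  rw [harg] at hbound
  have hne : ((n:ℝ≥0∞)+1) ≠ 0 := by simp
  have hnt : ((n:ℝ≥0∞)+1) ≠ ⊤ := by
    simp [ENNReal.add_ne_top]
  calc μ S ≤ q ^ n + n * gaussianReal 0 1 (Set.Iic (-c)) := hbound
    _ ≤ (ε:ℝ≥0∞)/2 + ((n:ℝ≥0∞)+1) * ((ε:ℝ≥0∞)/2/((n:ℝ≥0∞)+1)) := by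
        exact add_le_add hn.le (mul_le_mul' le_self_add hc.le)
    _ = (ε:ℝ≥0∞)/2 + (ε:ℝ≥0∞)/2 := by rw [ENNReal.mul_div_cancel hne hnt]
    _ = (ε:ℝ≥0∞) := ENNReal.add_halves _
end Core

section Approx
set_option linter.unusedSectionVars false
variable {Ω : Type*} [MeasureSpace Ω] [IsProbabilityMeasure (volume : Measure Ω)]

/-- Event: on the `i`-th of `j` subintervals of `[0,1]`, `B` is at least `2/j` at all
rational times. -/
def HsetI (B : ℝ≥0 → Ω → ℝ) (j i : ℕ) : Set Ω :=
  ⋂ (r : ℚ) (_ : (i:ℝ)/j ≤ (r:ℝ)) (_ : (r:ℝ) ≤ ((i:ℝ)+1)/j),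
    {ω | 2/(j:ℝ) ≤ B (Real.toNNReal (r:ℝ)) ω}

def Hset (B : ℝ≥0 → Ω → ℝ) (j : ℕ) : Set Ω := ⋃ (i : ℕ) (_ : i < j), HsetI B j i

def Dset (B : ℝ≥0 → Ω → ℝ) (k : ℕ) : Set Ω :=
  ⋂ (j : ℕ) (_ : 2 ≤ j) (_ : j ≤ k), (Hset B j)ᶜ

variable (B : ℝ≥0 → Ω → ℝ)

lemma Dset_antitone : Antitone (Dset B) := by
  intro k k' hkk'
  refine Set.iInter_mono fun j => Set.iInter_mono fun h2 => ?_
  intro ω hω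
  simp only [Set.mem_iInter] at hω ⊢
  intro hjk
  exact hω (le_trans hjk hkk')


lemma Dset_nullmeas (h0 : ∀ᵐ ω ∂(volume : Measure Ω), B 0 ω = 0)
    (hmap : ∀ s t : ℝ≥0, s ≤ t →
      Measure.map (fun ω => B t ω - B s ω) (volume : Measure Ω) = gaussianReal 0 (t - s))
    (k : ℕ) : NullMeasurableSet (Dset B k) (volume : Measure Ω) := by
  refine NullMeasurableSet.iInter fun j => NullMeasurableSet.iInter fun _ =>
    NullMeasurableSet.iInter fun _ => NullMeasurableSet.compl ?_
  refine NullMeasurableSet.iUnion fun i => NullMeasurableSet.iUnion fun _ => ?_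
  refine NullMeasurableSet.iInter fun r => NullMeasurableSet.iInter fun _ =>
    NullMeasurableSet.iInter fun _ => ?_
  have : {ω : Ω | 2/(j:ℝ) ≤ B (Real.toNNReal (r:ℝ)) ω}
      = (B (Real.toNNReal (r:ℝ))) ⁻¹' (Set.Ici (2/(j:ℝ))) := rfl
  rw [this]
  exact (aemeas_B B h0 hmap _).nullMeasurableSet_preimage measurableSet_Ici

lemma iInter_Dset_subset :
    (⋂ k, Dset B k) ∩ {ω | Continuous fun t : ℝ≥0 => B t ω}
      ⊆ {ω | ∀ t : ℝ≥0, t ≤ 1 → B t ω ≤ 0} := by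
  rintro ω ⟨hD, hcont⟩
  simp only [Dset, Set.mem_iInter, Set.mem_compl_iff] at hD
  intro t ht
  by_contra hpos
  push_neg at hpos
  set a := B t ω / 3 with ha_def
  have ha : 0 < a := by positivity
  set g : ℝ → ℝ := fun x => B (Real.toNNReal x) ω with hg_def
  have hg : Continuous g := (hcont : Continuous fun t : ℝ≥0 => B t ω).comp continuous_real_toNNReal
  have hgt : g (t:ℝ) = B t ω := by simp [hg_def, Real.toNNReal_coe]
  have hopen : IsOpen {x : ℝ | 2*a < g x} := isOpen_lt continuous_const hg
  have htmem : (t:ℝ) ∈ {x : ℝ | 2*a < g x} := by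
    simp only [Set.mem_setOf_eq, hgt, ha_def]
    linarith
  obtain ⟨ρ, hρ, hball⟩ := Metric.isOpen_iff.1 hopen _ htmem
  set j : ℕ := ⌈1/ρ⌉₊ + ⌈1/a⌉₊ + 2 with hj_def
  have hj2 : 2 ≤ j := by omega
  have hjpos : (0:ℝ) < j := by positivity
  have hjρ : 1/(j:ℝ) < ρ := by
    rw [div_lt_iff₀ hjpos]
    have h1 : 1/ρ ≤ (⌈1/ρ⌉₊ : ℝ) := Nat.le_ceil _
    have h2 : ((⌈1/ρ⌉₊ : ℕ) : ℝ) < j := by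
      have : ⌈1/ρ⌉₊ < j := by omega
      exact_mod_cast this
    rw [div_le_iff₀ hρ] at h1
    nlinarith
  have hja : 2/(j:ℝ) ≤ 2*a := by
    rw [div_le_iff₀ hjpos]
    have h1 : 1/a ≤ (⌈1/a⌉₊ : ℝ) := Nat.le_ceil _
    have h2 : ((⌈1/a⌉₊ : ℕ) : ℝ) ≤ j := by
      have : ⌈1/a⌉₊ ≤ j := by omega
      exact_mod_cast this
    rw [div_le_iff₀ ha] at h1
    nlinarith
  refine hD j j hj2 le_rfl ?_
  show _ ∈ Hset B j
  rw [Hset]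
  set i : ℕ := min (⌊(t:ℝ)*j⌋₊) (j-1) with hi_def
  have hij : i < j := by omega
  have hti : (i:ℝ) ≤ (t:ℝ)*j ∧ (t:ℝ)*j ≤ (i:ℝ)+1 := by
    have htj0 : 0 ≤ (t:ℝ)*j := by positivity
    have htjle : (t:ℝ)*j ≤ j := by
      have h1 : (t:ℝ) ≤ 1 := by exact_mod_cast ht
      nlinarith
    by_cases hcase : ⌊(t:ℝ)*j⌋₊ ≤ j-1
    · have hieq : i = ⌊(t:ℝ)*j⌋₊ := by omega
      rw [hieq]
      exact ⟨Nat.floor_le htj0, (Nat.lt_floor_add_one _).le⟩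
    · have hieq : i = j - 1 := by omega
      have hfl : j ≤ ⌊(t:ℝ)*j⌋₊ := by omega
      have h1 : (j:ℝ) ≤ (t:ℝ)*j := by
        exact_mod_cast (Nat.le_floor_iff htj0).1 hfl
      have hcast : ((i:ℕ):ℝ) = (j:ℝ) - 1 := by
        rw [hieq]
        push_cast [Nat.cast_sub (by omega : 1 ≤ j)]
        ring
      constructor
      · rw [hcast]; linarith
      · rw [hcast]; linarith
  refine Set.mem_iUnion₂.2 ⟨i, hij, ?_⟩
  refine Set.mem_iInter.2 fun r => Set.mem_iInter.2 fun hr1 => Set.mem_iInter.2 fun hr2 => ?_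
  have htIcc : (i:ℝ)/j ≤ (t:ℝ) ∧ (t:ℝ) ≤ ((i:ℝ)+1)/j := by
    constructor
    · rw [div_le_iff₀ hjpos]; exact hti.1
    · rw [le_div_iff₀ hjpos]; exact hti.2
  have hdist : |(r:ℝ) - (t:ℝ)| < ρ := by
    have h1 : ((i:ℝ)+1)/j - (i:ℝ)/j = 1/j := by field_simp; ring
    rw [abs_sub_lt_iff]
    constructor <;> nlinarith [htIcc.1, htIcc.2, hjρ]
  have := hball (by simpa [Real.dist_eq] using hdist)
  simp only [Set.mem_setOf_eq] at this ⊢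
  linarith
end Approx

lemma count_lemma (c L : ℝ) (K : ℕ) (hc : 0 ≤ c) (hL : 0 < L) (hcL : c + L ≤ 1)
    (hK : 6 ≤ L * K) (P : ℕ → Prop)
    (hP : ∀ m : ℕ, 1 ≤ m → c ≤ (m:ℝ)/K → ((m:ℝ)+1)/K ≤ c + L → P m) :
    L/2 * K ≤ (Set.ncard {m : ℕ | 1 ≤ m ∧ m < K ∧ P m} : ℝ) := by
  have hK0 : 0 < K := by
    rcases Nat.eq_zero_or_pos K with h | h
    · subst h; simp at hK; linarith
    · exact h
  have hKr : (0:ℝ) < K := by exact_mod_cast hK0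
  set a : ℕ := max ⌈c*K⌉₊ 1 with ha_def
  set b : ℕ := ⌊(c+L)*K⌋₊ with hb_def
  have har : (a:ℝ) ≤ c*K + 1 := by
    have h1 : (⌈c*K⌉₊ : ℝ) < c*K + 1 := Nat.ceil_lt_add_one (by positivity)
    have h2 : ((max ⌈c*K⌉₊ 1 : ℕ) : ℝ) ≤ max (⌈c*K⌉₊:ℝ) 1 := by
      push_cast; exact le_rfl
    calc (a:ℝ) ≤ max (⌈c*K⌉₊:ℝ) 1 := h2
      _ ≤ c*K + 1 := max_le h1.le (by nlinarith)
  have hbr : (c+L)*K - 1 < (b:ℝ) := by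
    have := Nat.lt_floor_add_one ((c+L)*K)
    linarith
  have hble : (b:ℝ) ≤ (c+L)*K := Nat.floor_le (by positivity)
  have hdiff : L*K - 2 ≤ (b:ℝ) - (a:ℝ) := by nlinarith
  have hab : a ≤ b := by
    have h6 : (2:ℝ) ≤ L*K - 2 - 2 := by linarith
    have : (a:ℝ) ≤ (b:ℝ) := by nlinarith
    exact_mod_cast this
  have hsub : ↑(Finset.Ico a b) ⊆ {m : ℕ | 1 ≤ m ∧ m < K ∧ P m} := by
    intro m hm
    simp only [Finset.coe_Ico, Set.mem_Ico] at hm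
    obtain ⟨ham, hmb⟩ := hm
    have hm1 : 1 ≤ m := le_trans (le_max_right _ 1) ham
    have hcm : c ≤ (m:ℝ)/K := by
      rw [le_div_iff₀ hKr]
      have h1 : c*K ≤ (⌈c*K⌉₊:ℝ) := Nat.le_ceil _
      have h2 : (⌈c*K⌉₊:ℕ) ≤ m := le_trans (le_max_left _ 1) ham
      have h3 : ((⌈c*K⌉₊:ℕ):ℝ) ≤ (m:ℝ) := by exact_mod_cast h2
      linarith
    have hm1b : ((m:ℝ)+1) ≤ (c+L)*K := by
      have h1 : m + 1 ≤ b := hmb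
      have h2 : ((m+1:ℕ):ℝ) ≤ (b:ℝ) := by exact_mod_cast h1
      push_cast at h2
      linarith
    have hmK : m < K := by
      have h1 : ((m:ℝ)+1) ≤ (K:ℝ) := by nlinarith
      have h2 : ((m+1:ℕ):ℝ) ≤ (K:ℝ) := by push_cast; linarith
      have : m + 1 ≤ K := by exact_mod_cast h2
      omega
    have hdiv : ((m:ℝ)+1)/K ≤ c + L := by
      rw [div_le_iff₀ hKr]; linarith
    exact ⟨hm1, hmK, hP m hm1 hcm hdiv⟩
  have hfin : {m : ℕ | 1 ≤ m ∧ m < K ∧ P m}.Finite :=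
    Set.Finite.subset (Set.finite_Iio K) (fun m hm => hm.2.1)
  have hcard : (b - a : ℕ) ≤ Set.ncard {m : ℕ | 1 ≤ m ∧ m < K ∧ P m} := by
    have := Set.ncard_le_ncard hsub hfin
    rwa [Set.ncard_coe_finset, Nat.card_Ico] at this
  have hcast : ((b - a : ℕ):ℝ) = (b:ℝ) - (a:ℝ) := by
    push_cast [Nat.cast_sub hab]; ring
  have : (b:ℝ) - (a:ℝ) ≤ (Set.ncard {m : ℕ | 1 ≤ m ∧ m < K ∧ P m} : ℝ) := by
    rw [← hcast]; exact_mod_cast hcard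
  nlinarith

section Bridge
variable {Ω : Type*} [MeasureSpace Ω] [IsProbabilityMeasure (volume : Measure Ω)]
  (B : ℝ≥0 → Ω → ℝ)
set_option linter.unusedSectionVars false

lemma good_interval (k : ℕ) (ω : Ω)
    (hcont : Continuous fun t : ℝ≥0 => B t ω) (hω : ω ∉ Dset B k) :
    ∃ j i : ℕ, 2 ≤ j ∧ j ≤ k ∧ i < j ∧
      ∀ t : ℝ≥0, (i:ℝ)/j ≤ (t:ℝ) → (t:ℝ) ≤ ((i:ℝ)+1)/j → 2/(j:ℝ) ≤ B t ω := by
  simp only [Dset, Set.mem_iInter, Set.mem_compl_iff, not_forall, not_not] at hω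
  obtain ⟨j, h2j, hjk, hH⟩ := hω
  rw [Hset] at hH
  obtain ⟨i, hij, hHI⟩ := Set.mem_iUnion₂.1 hH
  refine ⟨j, i, h2j, hjk, hij, ?_⟩
  have hjpos : (0:ℝ) < j := by
    have : 0 < j := by omega
    exact_mod_cast this
  set g : ℝ → ℝ := fun x => B (Real.toNNReal x) ω with hg_def
  have hg : Continuous g := hcont.comp continuous_real_toNNReal
  have hZ : IsClosed {x : ℝ | 2/(j:ℝ) ≤ g x} := isClosed_le continuous_const hg
  have hIoo : Set.Ioo ((i:ℝ)/j) (((i:ℝ)+1)/j) ⊆ {x : ℝ | 2/(j:ℝ) ≤ g x} := by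
    have hsub1 : Set.Ioo ((i:ℝ)/j) (((i:ℝ)+1)/j) ⊆
        closure (Set.Ioo ((i:ℝ)/j) (((i:ℝ)+1)/j) ∩ Set.range ((↑) : ℚ → ℝ)) :=
      Rat.denseRange_cast.open_subset_closure_inter isOpen_Ioo
    have hsub2 : Set.Ioo ((i:ℝ)/j) (((i:ℝ)+1)/j) ∩ Set.range ((↑) : ℚ → ℝ)
        ⊆ {x : ℝ | 2/(j:ℝ) ≤ g x} := by
      rintro x ⟨hx, ⟨r, rfl⟩⟩
      have h1 : (i:ℝ)/j ≤ (r:ℝ) := hx.1.le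
      have h2 : (r:ℝ) ≤ ((i:ℝ)+1)/j := hx.2.le
      exact Set.mem_iInter.1 (Set.mem_iInter.1 (Set.mem_iInter.1 hHI r) h1) h2
    calc Set.Ioo ((i:ℝ)/j) (((i:ℝ)+1)/j)
        ⊆ closure (Set.Ioo ((i:ℝ)/j) (((i:ℝ)+1)/j) ∩ Set.range ((↑) : ℚ → ℝ)) := hsub1
      _ ⊆ closure {x : ℝ | 2/(j:ℝ) ≤ g x} := closure_mono hsub2
      _ = {x : ℝ | 2/(j:ℝ) ≤ g x} := hZ.closure_eq
  have hIcc : Set.Icc ((i:ℝ)/j) (((i:ℝ)+1)/j) ⊆ {x : ℝ | 2/(j:ℝ) ≤ g x} := by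
    have hlt : (i:ℝ)/j < ((i:ℝ)+1)/j := by
      rw [div_lt_div_iff₀ hjpos hjpos]
      nlinarith
    rw [← closure_Ioo hlt.ne]
    exact closure_minimal hIoo hZ
  intro t h1 h2
  have := hIcc ⟨h1, h2⟩
  simpa [hg_def, Real.toNNReal_coe] using this
end Bridge

/-- For a standard Brownian motion `B` and `p ∈ (0,1)`, there are
`ε, δ ∈ (0,1)` and `K₀ ∈ ℕ`, depending only on `p`, such that for every `K ≥ K₀`, with
probability at least `p`, the number of indices `j ∈ {1, …, K−1}` with `B t > δ` for all
`t ∈ [j/K, (j+1)/K]` is at least `ε K`. -/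
theorem brownian_many_good_intervals
    {Ω : Type*} [MeasureSpace Ω] [IsProbabilityMeasure (volume : Measure Ω)]
    (B : ℝ≥0 → Ω → ℝ) (hB : IsStandardBrownianMotion B)
    (p : ℝ) (hp : p ∈ Set.Ioo (0 : ℝ) 1) :
    ∃ ε ∈ Set.Ioo (0 : ℝ) 1, ∃ δ ∈ Set.Ioo (0 : ℝ) 1, ∃ K₀ : ℕ,
      ∀ K : ℕ, K₀ ≤ K →
        ENNReal.ofReal p ≤
          (volume : Measure Ω) {ω | ε * K ≤
            (Set.ncard {j : ℕ | 1 ≤ j ∧ j < K ∧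
              ∀ t : ℝ≥0, (j : ℝ≥0) / K ≤ t → t ≤ ((j : ℝ≥0) + 1) / K → δ < B t ω} : ℝ)} := by
  obtain ⟨h0, hcontae, hmap, hindep⟩ := hB
  obtain ⟨hp0, hp1⟩ := hp
  set μ := (volume : Measure Ω) with hμ_def
  have hcnull : μ ({ω | Continuous fun t : ℝ≥0 => B t ω}ᶜ) = 0 := by
    rw [Set.compl_setOf]
    exact ae_iff.1 hcontae
  have hη : (0:ℝ≥0∞) < ENNReal.ofReal (1-p) := ENNReal.ofReal_pos.2 (by linarith)
  obtain ⟨k, hk2, hkD⟩ : ∃ k, 2 ≤ k ∧ μ (Dset B k) < ENNReal.ofReal (1-p) := by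
    have hnull : ∀ k, NullMeasurableSet (Dset B k) μ := fun k => Dset_nullmeas B h0 hmap k
    have htend := tendsto_measure_iInter_atTop (μ := μ) hnull (Dset_antitone B)
      ⟨0, measure_ne_top _ _⟩
    have hzero : μ (⋂ k, Dset B k) = 0 := by
      have hsub : (⋂ k, Dset B k) ⊆ {ω | ∀ t : ℝ≥0, t ≤ 1 → B t ω ≤ 0}
          ∪ {ω | Continuous fun t : ℝ≥0 => B t ω}ᶜ := by
        intro ω hω
        by_cases hc : Continuous fun t : ℝ≥0 => B t ω
        · exact Or.inl (iInter_Dset_subset B ⟨hω, hc⟩)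
        · exact Or.inr hc
      refine le_antisymm ?_ zero_le
      calc μ (⋂ k, Dset B k)
          ≤ μ ({ω | ∀ t : ℝ≥0, t ≤ 1 → B t ω ≤ 0})
            + μ ({ω | Continuous fun t : ℝ≥0 => B t ω}ᶜ) :=
            le_trans (measure_mono hsub) (measure_union_le _ _)
        _ = 0 := by rw [stay_nonpos B h0 hmap hindep, hcnull, add_zero]
    rw [hzero] at htend
    obtain ⟨k', hk'⟩ := (htend.eventually_lt_const hη).exists
    exact ⟨max k' 2, le_max_right _ _,
      lt_of_le_of_lt (measure_mono (Dset_antitone B (le_max_left _ _))) hk'⟩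
  have hkr : (0:ℝ) < k := by
    have : 0 < k := by omega
    exact_mod_cast this
  refine ⟨1/(2*(k:ℝ)), ⟨by positivity, ?_⟩, 1/(k:ℝ), ⟨by positivity, ?_⟩, 6*k, ?_⟩
  · rw [div_lt_one (by positivity)]
    have : (2:ℝ) ≤ k := by exact_mod_cast hk2
    linarith
  · rw [div_lt_one hkr]
    have : (2:ℝ) ≤ k := by exact_mod_cast hk2
    linarith
  intro K hK
  have hKpos : 0 < K := by omega
  have hKr : (0:ℝ) < K := by exact_mod_cast hKpos
  set T := {ω : Ω | 1/(2*(k:ℝ)) * K ≤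
      (Set.ncard {j : ℕ | 1 ≤ j ∧ j < K ∧
        ∀ t : ℝ≥0, (j : ℝ≥0) / K ≤ t → t ≤ ((j : ℝ≥0) + 1) / K → 1/(k:ℝ) < B t ω} : ℝ)}
    with hT_def
  have hTsub : (Dset B k)ᶜ ∩ {ω | Continuous fun t : ℝ≥0 => B t ω} ⊆ T := by
    rintro ω ⟨hω, hcont⟩
    obtain ⟨j0, i0, h2j, hjk, hij, hgood⟩ := good_interval B k ω hcont hω
    have hjr : (0:ℝ) < j0 := by
      have : 0 < j0 := by omega
      exact_mod_cast this
    have hjkr : (j0:ℝ) ≤ k := by exact_mod_cast hjk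
    have hcount := count_lemma ((i0:ℝ)/j0) (1/(k:ℝ)) K (by positivity) (by positivity)
      ?_ ?_ (fun m => ∀ t : ℝ≥0, (m : ℝ≥0) / K ≤ t → t ≤ ((m : ℝ≥0) + 1) / K
        → 1/(k:ℝ) < B t ω) ?_
    · show 1/(2*(k:ℝ)) * K ≤ _
      have heq : (1/(k:ℝ))/2 = 1/(2*(k:ℝ)) := by ring
      rw [heq] at hcount
      exact hcount
    · -- c + L ≤ 1
      have h1 : (i0:ℝ) + 1 ≤ j0 := by exact_mod_cast hij
      have h2 : (i0:ℝ)/j0 ≤ 1 - 1/j0 := by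
        rw [div_le_iff₀ hjr]
        have : (1 - 1/(j0:ℝ)) * j0 = j0 - 1 := by field_simp
        rw [this]
        linarith
      have h3 : 1/(k:ℝ) ≤ 1/(j0:ℝ) := one_div_le_one_div_of_le hjr hjkr
      linarith
    · -- 6 ≤ L * K
      rw [div_mul_eq_mul_div, one_mul, le_div_iff₀ hkr]
      have : ((6*k:ℕ):ℝ) ≤ (K:ℝ) := by exact_mod_cast hK
      push_cast at this
      linarith
    · -- hP
      intro m hm1 hcm hdiv t ht1 ht2
      have hcast1 : (((m : ℝ≥0) / K : ℝ≥0) : ℝ) = (m:ℝ)/K := by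
        push_cast
        ring
      have hcast2 : ((((m : ℝ≥0)+1) / K : ℝ≥0) : ℝ) = ((m:ℝ)+1)/K := by
        push_cast
        ring
      have ht1' : (m:ℝ)/K ≤ (t:ℝ) := by
        rw [← hcast1]
        exact_mod_cast ht1
      have ht2' : (t:ℝ) ≤ ((m:ℝ)+1)/K := by
        rw [← hcast2]
        exact_mod_cast ht2
      have h3 : 1/(k:ℝ) ≤ 1/(j0:ℝ) := one_div_le_one_div_of_le hjr hjkr
      have hsum : (i0:ℝ)/j0 + 1/(k:ℝ) ≤ ((i0:ℝ)+1)/j0 := by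
        have h4 : (i0:ℝ)/j0 + 1/(j0:ℝ) = ((i0:ℝ)+1)/j0 := by ring
        linarith
      have hB2 : 2/(j0:ℝ) ≤ B t ω := hgood t (le_trans hcm ht1')
        (le_trans ht2' (le_trans hdiv hsum))
      have h5 : 1/(k:ℝ) < 2/(j0:ℝ) := by
        have h6 : 2/(k:ℝ) ≤ 2/(j0:ℝ) := div_le_div_of_nonneg_left (by norm_num) hjr hjkr
        have h7 : (2:ℝ)/k = 1/k + 1/k := by ring
        have h8 : (0:ℝ) < 1/(k:ℝ) := by positivity
        linarith
      linarith
  have huniv : (Set.univ : Set Ω) ⊆ T ∪ Dset B k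
      ∪ {ω | Continuous fun t : ℝ≥0 => B t ω}ᶜ := by
    intro ω _
    by_cases h1 : ω ∈ Dset B k
    · exact Or.inl (Or.inr h1)
    by_cases h2 : Continuous fun t : ℝ≥0 => B t ω
    · exact Or.inl (Or.inl (hTsub ⟨h1, h2⟩))
    · exact Or.inr h2
  have h1 : (1:ℝ≥0∞) ≤ μ T + μ (Dset B k) := by
    calc (1:ℝ≥0∞) = μ Set.univ := measure_univ.symm
      _ ≤ μ (T ∪ Dset B k ∪ {ω | Continuous fun t : ℝ≥0 => B t ω}ᶜ) := measure_mono huniv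
      _ ≤ μ (T ∪ Dset B k) + μ ({ω | Continuous fun t : ℝ≥0 => B t ω}ᶜ) :=
          measure_union_le _ _
      _ = μ (T ∪ Dset B k) := by rw [hcnull, add_zero]
      _ ≤ μ T + μ (Dset B k) := measure_union_le _ _
  have hofp : ENNReal.ofReal p + ENNReal.ofReal (1-p) = 1 := by
    rw [← ENNReal.ofReal_add (by linarith) (by linarith)]
    norm_num
  by_contra hlt
  push_neg at hlt
  have hstrict : μ T + μ (Dset B k) < ENNReal.ofReal p + ENNReal.ofReal (1-p) :=
    ENNReal.add_lt_add hlt hkD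
  rw [hofp] at hstrict
  exact absurd h1 (not_le.2 hstrict)
end

section
/- For each n ∈ ℕ let d_n : ℂ × ℂ → ℝ be a metric on ℂ which is continuous as a function on ℂ × ℂ with the Euclidean topology, and let d : ℂ × ℂ → ℝ be a function such that d_n → d uniformly on compact subsets of ℂ × ℂ. Assume: (a) each d_n admits midpoints, i.e., for all z, w ∈ ℂ there exists x ∈ ℂ with d_n(z, x) = d_n(z, w)/2 = d_n(x, w); and (b) for every r > 0 and T > 0 there exists R > 0 such that for all n ∈ ℕ, d_n(z, w) > T whenever |z| ≤ r and |w| ≥ R. Then d admits midpoints: for all z, w ∈ ℂ there exists x ∈ ℂ with d(z, x) = d(z, w)/2 = d(x, w). -/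
open Filter Topology

/-- Let `dn n` be continuous metrics on `ℂ` converging locally uniformly
(on compact subsets of `ℂ × ℂ`) to `d`. If every `dn n` admits midpoints and the metrics
`dn n` are uniformly proper (points of large modulus are uniformly far from bounded sets),
then `d` admits midpoints. -/
theorem midpoints_of_locally_uniform_limit
    (dn : ℕ → ℂ → ℂ → ℝ) (d : ℂ → ℂ → ℝ)
    (hnonneg : ∀ n z w, 0 ≤ dn n z w)
    (heq : ∀ n z w, dn n z w = 0 ↔ z = w)
    (hsymm : ∀ n z w, dn n z w = dn n w z)
    (htri : ∀ n x y z, dn n x z ≤ dn n x y + dn n y z)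
    (hcont : ∀ n, Continuous fun p : ℂ × ℂ => dn n p.1 p.2)
    (hunif : ∀ K : Set (ℂ × ℂ), IsCompact K →
      TendstoUniformlyOn (fun n (p : ℂ × ℂ) => dn n p.1 p.2) (fun p => d p.1 p.2) atTop K)
    (hmid : ∀ n (z w : ℂ), ∃ x : ℂ,
      dn n z x = dn n z w / 2 ∧ dn n x w = dn n z w / 2)
    (hproper : ∀ r > (0 : ℝ), ∀ T > (0 : ℝ), ∃ R > (0 : ℝ), ∀ n, ∀ z w : ℂ,
      ‖z‖ ≤ r → R ≤ ‖w‖ → T < dn n z w) :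
    ∀ z w : ℂ, ∃ x : ℂ, d z x = d z w / 2 ∧ d x w = d z w / 2 := by
  intro z w
  -- choose midpoints
  choose x hx1 hx2 using fun n => hmid n z w
  -- dn n z w tends to d z w
  have hzw : Tendsto (fun n => dn n z w) atTop (𝓝 (d z w)) := by
    have h := (hunif {(z, w)} isCompact_singleton).tendsto_at (x := (z, w)) rfl
    exact h
  obtain ⟨T, hT⟩ := hzw.bddAbove_range
  have hT' : ∀ n, dn n z w ≤ T := fun n => hT ⟨n, rfl⟩
  have hT0 : 0 ≤ T := le_trans (hnonneg 0 z w) (hT' 0)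
  -- uniform bound on the midpoints
  obtain ⟨R, hRpos, hR⟩ := hproper (‖z‖ + 1)
    (by positivity) (T + 1) (by linarith)
  have hxb : ∀ n, ‖x n‖ ≤ R := by
    intro n
    by_contra h
    push_neg at h
    have := hR n z (x n) (by linarith [norm_nonneg z]) h.le
    rw [hx1 n] at this
    linarith [hT' n, hnonneg n z w]
  -- extract a convergent subsequence
  obtain ⟨a, ha, φ, hφ, hlim⟩ := (isCompact_closedBall (0 : ℂ) R).tendsto_subseq
    (x := x) (fun n => by simpa using hxb n)
  -- the compact set
  set M : ℝ := max R (max (‖z‖) (‖w‖)) with hM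
  set K : Set (ℂ × ℂ) := Metric.closedBall 0 M ×ˢ Metric.closedBall 0 M with hK
  have hKc : IsCompact K := (isCompact_closedBall _ _).prod (isCompact_closedBall _ _)
  have hzK : ‖z‖ ≤ M := le_max_of_le_right (le_max_left _ _)
  have hwK : ‖w‖ ≤ M := le_max_of_le_right (le_max_right _ _)
  have hxK : ∀ n, ‖x n‖ ≤ M := fun n => le_trans (hxb n) (le_max_left _ _)
  have haK : ‖a‖ ≤ M := by
    have := Metric.mem_closedBall.mp ha
    simp only [dist_zero_right] at this
    exact le_trans this (le_max_left _ _)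
  have huK := hunif K hKc
  have hdc : ContinuousOn (fun p : ℂ × ℂ => d p.1 p.2) K :=
    huK.continuousOn (Eventually.of_forall fun n => (hcont n).continuousOn).frequently
  -- subsequence uniform convergence
  have huKφ : TendstoUniformlyOn (fun k (p : ℂ × ℂ) => dn (φ k) p.1 p.2)
      (fun p => d p.1 p.2) atTop K := fun u hu =>
    hφ.tendsto_atTop.eventually (huK u hu)
  have memK : ∀ p : ℂ × ℂ, ‖p.1‖ ≤ M → ‖p.2‖ ≤ M → p ∈ K := by
    intro p h1 h2
    constructor <;> simp [Metric.mem_closedBall] <;> assumption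
  -- limits
  have l1 : Tendsto (fun k => dn (φ k) z (x (φ k))) atTop (𝓝 (d z a)) := by
    have := huKφ.tendsto_comp (x := (z, a))
      (hdc.continuousWithinAt (memK _ hzK haK))
      (g := fun k => (z, x (φ k))) ?_
    · exact this
    · apply tendsto_nhdsWithin_of_tendsto_nhds_of_eventually_within
      · exact Tendsto.prodMk_nhds tendsto_const_nhds hlim
      · exact Eventually.of_forall fun k => memK _ hzK (hxK _)
  have l2 : Tendsto (fun k => dn (φ k) (x (φ k)) w) atTop (𝓝 (d a w)) := by
    have := huKφ.tendsto_comp (x := (a, w))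
      (hdc.continuousWithinAt (memK _ haK hwK))
      (g := fun k => (x (φ k), w)) ?_
    · exact this
    · apply tendsto_nhdsWithin_of_tendsto_nhds_of_eventually_within
      · exact Tendsto.prodMk_nhds hlim tendsto_const_nhds
      · exact Eventually.of_forall fun k => memK _ (hxK _) hwK
  have l3 : Tendsto (fun k => dn (φ k) z w / 2) atTop (𝓝 (d z w / 2)) :=
    (hzw.comp hφ.tendsto_atTop).div_const 2
  refine ⟨a, ?_, ?_⟩
  · exact tendsto_nhds_unique (by simpa only [hx1] using l1) l3 ▸ rfl
  · exact tendsto_nhds_unique (by simpa only [hx2] using l2) l3 ▸ rfl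
end

section
/- Let d : ℂ × ℂ → [0, ∞] be a function which is lower semicontinuous with respect to the Euclidean topology on ℂ × ℂ, symmetric (d(x,y) = d(y,x)), vanishing on the diagonal (d(x,x) = 0 for all x), and satisfying the triangle inequality d(x,z) ≤ d(x,y) + d(y,z) (with the usual arithmetic on [0,∞]). Let A, B ⊆ ℂ be nonempty disjoint compact sets, and define E_A := {x ∈ ℂ : inf_{a ∈ A} d(x,a) = 0} and E_B := {x ∈ ℂ : inf_{b ∈ B} d(x,b) = 0}. Then the following are equivalent: (1) inf_{a ∈ A, b ∈ B} d(a,b) > 0; (2) E_A ∩ E_B = ∅; (3) E_A ∩ B = ∅; (4) E_B ∩ A = ∅. -/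
open Filter Topology
open scoped ENNReal

/-- Let `d : ℂ × ℂ → [0,∞]` be a lower semicontinuous extended pseudometric
(symmetric, vanishing on the diagonal, satisfying the triangle inequality), and let `A, B`
be nonempty disjoint compact subsets of `ℂ`. With `E_A`, `E_B` the sets of points at zero
`d`-distance from `A`, `B` respectively, the following are equivalent: the `d`-distance
between `A` and `B` is positive; `E_A ∩ E_B = ∅`; `E_A ∩ B = ∅`; `E_B ∩ A = ∅`. -/
theorem positive_distance_iff_zero_sets_disjoint
    (d : ℂ → ℂ → ℝ≥0∞)
    (hlsc : ∀ (x y : ℕ → ℂ) (a b : ℂ),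
      Tendsto x atTop (𝓝 a) → Tendsto y atTop (𝓝 b) →
      d a b ≤ liminf (fun m => d (x m) (y m)) atTop)
    (hsymm : ∀ x y, d x y = d y x)
    (hdiag : ∀ x, d x x = 0)
    (htri : ∀ x y z, d x z ≤ d x y + d y z)
    (A B : Set ℂ) (hAne : A.Nonempty) (hBne : B.Nonempty)
    (hA : IsCompact A) (hB : IsCompact B) (hAB : Disjoint A B)
    (EA EB : Set ℂ)
    (hEA : EA = {x : ℂ | (⨅ a ∈ A, d x a) = 0})
    (hEB : EB = {x : ℂ | (⨅ b ∈ B, d x b) = 0}) :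
    ((0 < ⨅ a ∈ A, ⨅ b ∈ B, d a b) ↔ EA ∩ EB = ∅) ∧
    ((0 < ⨅ a ∈ A, ⨅ b ∈ B, d a b) ↔ EA ∩ B = ∅) ∧
    ((0 < ⨅ a ∈ A, ⨅ b ∈ B, d a b) ↔ EB ∩ A = ∅) := by
  -- key: if the distance is zero, there are a ∈ A, b ∈ B with d a b = 0
  have key : (⨅ a ∈ A, ⨅ b ∈ B, d a b) = 0 →
      ∃ a ∈ A, ∃ b ∈ B, d a b = 0 := by
    intro h0
    have hex : ∀ m : ℕ, ∃ a ∈ A, ∃ b ∈ B, d a b < (m : ℝ≥0∞)⁻¹ := by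
      intro m
      have hlt : (⨅ a ∈ A, ⨅ b ∈ B, d a b) < (m : ℝ≥0∞)⁻¹ := by
        rw [h0]
        simp [ENNReal.inv_pos]
      obtain ⟨a, ha⟩ := iInf_lt_iff.mp hlt
      obtain ⟨haA, ha2⟩ := iInf_lt_iff.mp ha
      obtain ⟨b, hb⟩ := iInf_lt_iff.mp ha2
      obtain ⟨hbB, hb2⟩ := iInf_lt_iff.mp hb
      exact ⟨a, haA, b, hbB, hb2⟩
    choose a haA b hbB hd using hex
    obtain ⟨a₀, ha₀, φ, hφ, hφa⟩ := hA.tendsto_subseq haA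
    obtain ⟨b₀, hb₀, ψ, hψ, hψb⟩ := hB.tendsto_subseq (fun n => hbB (φ n))
    have hta : Tendsto (fun m => a (φ (ψ m))) atTop (𝓝 a₀) :=
      hφa.comp hψ.tendsto_atTop
    have htb : Tendsto (fun m => b (φ (ψ m))) atTop (𝓝 b₀) := hψb
    have hσ : StrictMono (φ ∘ ψ) := hφ.comp hψ
    have htd : Tendsto (fun m => d (a (φ (ψ m))) (b (φ (ψ m)))) atTop (𝓝 0) := by
      have h1 : Tendsto (fun m : ℕ => (m : ℝ≥0∞)⁻¹) atTop (𝓝 0) :=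
        ENNReal.tendsto_inv_nat_nhds_zero
      refine tendsto_of_tendsto_of_tendsto_of_le_of_le tendsto_const_nhds h1
        (fun m => zero_le) (fun m => ?_)
      calc d (a (φ (ψ m))) (b (φ (ψ m))) ≤ ((φ (ψ m) : ℕ) : ℝ≥0∞)⁻¹ :=
            (hd _).le
        _ ≤ (m : ℝ≥0∞)⁻¹ := by
            apply ENNReal.inv_le_inv.mpr
            exact_mod_cast hσ.le_apply
    have hdd : d a₀ b₀ ≤ 0 := by
      have := hlsc (fun m => a (φ (ψ m))) (fun m => b (φ (ψ m))) a₀ b₀ hta htb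
      rwa [htd.liminf_eq] at this
    exact ⟨a₀, ha₀, b₀, hb₀, le_antisymm hdd (zero_le)⟩
  -- if 0 < distance then EA ∩ EB = ∅
  have fwd : (0 < ⨅ a ∈ A, ⨅ b ∈ B, d a b) → EA ∩ EB = ∅ := by
    intro hpos
    by_contra hne
    obtain ⟨x, hxA, hxB⟩ := Set.nonempty_iff_ne_empty.mpr hne
    rw [hEA] at hxA; rw [hEB] at hxB
    simp only [Set.mem_setOf_eq] at hxA hxB
    -- derive inf < inf
    have hlt : (⨅ a ∈ A, ⨅ b ∈ B, d a b) < (⨅ a ∈ A, ⨅ b ∈ B, d a b) := by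
      set ε := (⨅ a ∈ A, ⨅ b ∈ B, d a b) with hε
      have h2 : (0 : ℝ≥0∞) < ε / 2 := ENNReal.half_pos hpos.ne'
      have h1 : (⨅ a ∈ A, d x a) < ε / 2 := by rw [hxA]; exact h2
      have h1' : (⨅ b ∈ B, d x b) < ε / 2 := by rw [hxB]; exact h2
      obtain ⟨aa, haa⟩ := iInf_lt_iff.mp h1
      obtain ⟨haaA, haa2⟩ := iInf_lt_iff.mp haa
      obtain ⟨bb, hbb⟩ := iInf_lt_iff.mp h1'
      obtain ⟨hbbB, hbb2⟩ := iInf_lt_iff.mp hbb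
      calc ε ≤ d aa bb := by
            exact le_trans (iInf₂_le aa haaA) (iInf₂_le bb hbbB)
        _ ≤ d aa x + d x bb := htri _ _ _
        _ < ε / 2 + ε / 2 := by
            refine ENNReal.add_lt_add ?_ hbb2
            rwa [hsymm]
        _ = ε := ENNReal.add_halves ε
    exact lt_irrefl _ hlt
  -- from inf = 0, get nonempty intersections
  have bwd : ∀ (S : Set ℂ), (EA ∩ S = ∅ ∨ EA ∩ EB = ∅ ∨ EB ∩ S = ∅) →
      True := fun _ _ => trivial
  have main : (⨅ a ∈ A, ⨅ b ∈ B, d a b) = 0 →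
      (EA ∩ EB).Nonempty ∧ (EA ∩ B).Nonempty ∧ (EB ∩ A).Nonempty := by
    intro h0
    obtain ⟨a₀, ha₀, b₀, hb₀, hd0⟩ := key h0
    have hbEA : b₀ ∈ EA := by
      rw [hEA]
      simp only [Set.mem_setOf_eq]
      refine le_antisymm ?_ (zero_le)
      calc (⨅ a ∈ A, d b₀ a) ≤ d b₀ a₀ := iInf₂_le a₀ ha₀
        _ = 0 := by rw [hsymm]; exact hd0
    have hbEB : b₀ ∈ EB := by
      rw [hEB]
      simp only [Set.mem_setOf_eq]
      refine le_antisymm ?_ (zero_le)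
      calc (⨅ b ∈ B, d b₀ b) ≤ d b₀ b₀ := iInf₂_le b₀ hb₀
        _ = 0 := hdiag _
    have haEB : a₀ ∈ EB := by
      rw [hEB]
      simp only [Set.mem_setOf_eq]
      refine le_antisymm ?_ (zero_le)
      calc (⨅ b ∈ B, d a₀ b) ≤ d a₀ b₀ := iInf₂_le b₀ hb₀
        _ = 0 := hd0
    exact ⟨⟨b₀, hbEA, hbEB⟩, ⟨b₀, hbEA, hb₀⟩, ⟨a₀, haEB, ha₀⟩⟩
  have pos_of : ∀ (h : ¬ (0 < ⨅ a ∈ A, ⨅ b ∈ B, d a b)),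
      (⨅ a ∈ A, ⨅ b ∈ B, d a b) = 0 := by
    intro h
    exact le_antisymm (not_lt.mp h) (zero_le)
  refine ⟨⟨fwd, ?_⟩, ⟨fun hpos => ?_, ?_⟩, ⟨fun hpos => ?_, ?_⟩⟩
  · intro hemp
    by_contra h
    obtain ⟨hne, _, _⟩ := main (pos_of h)
    rw [hemp] at hne
    exact Set.not_nonempty_empty hne
  · have := fwd hpos
    have hBsub : B ⊆ EB := by
      intro b hb
      rw [hEB]
      simp only [Set.mem_setOf_eq]
      exact le_antisymm (le_trans (iInf₂_le b hb) (hdiag b).le) (zero_le)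
    rw [Set.eq_empty_iff_forall_notMem] at this ⊢
    exact fun x ⟨h1, h2⟩ => this x ⟨h1, hBsub h2⟩
  · intro hemp
    by_contra h
    obtain ⟨_, hne, _⟩ := main (pos_of h)
    rw [hemp] at hne
    exact Set.not_nonempty_empty hne
  · have := fwd hpos
    have hAsub : A ⊆ EA := by
      intro a ha
      rw [hEA]
      simp only [Set.mem_setOf_eq]
      exact le_antisymm (le_trans (iInf₂_le a ha) (hdiag a).le) (zero_le)
    rw [Set.eq_empty_iff_forall_notMem] at this ⊢
    exact fun x ⟨h1, h2⟩ => this x ⟨hAsub h2, h1⟩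
  · intro hemp
    by_contra h
    obtain ⟨_, _, hne⟩ := main (pos_of h)
    rw [hemp] at hne
    exact Set.not_nonempty_empty hne
end
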